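/- If μ is a λ-compact cardinal and λ is a strong limit singular cardinal with cf(λ) ≥ μ, then every product of [μ,λ]-compact topological spaces is [μ,λ]-compact (i.e., [μ,λ]-compactness is productive). One may assume as given the two lemmas: (i) every [μ,ν]-compact space with 2^|I| ≤ λ is D-compact for a μ-complete ultrafilter D over I, and (ii) if D is (μ,ν)-regular and X is D-compact then X is [μ,ν]-compact. -/

import Mathlib

open Cardinal

/-- `X` is `[μ,λ]`-compact: every open cover by at most `lam` sets
has a subcover by fewer than `μ` sets. -/
def CptIn (μ lam : Cardinal) (X : Type) [TopologicalSpace X] : Prop :=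
  ∀ 𝒰 : Set (Set X), (∀ U ∈ 𝒰, IsOpen U) → #𝒰 ≤ lam → ⋃₀ 𝒰 = Set.univ →
    ∃ 𝒱 ⊆ 𝒰, #𝒱 < μ ∧ ⋃₀ 𝒱 = Set.univ

/-- `p` is a `D`-limit point of the sequence `x`. -/
def IsDLimit {I X : Type} [TopologicalSpace X] (D : Ultrafilter I) (x : I → X) (p : X) : Prop :=
  ∀ U : Set X, IsOpen U → p ∈ U → {i | x i ∈ U} ∈ D

/-- `X` is `D`-compact. -/
def DCompact {I : Type} (D : Ultrafilter I) (X : Type) [TopologicalSpace X] : Prop :=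
  ∀ x : I → X, ∃ p : X, IsDLimit D x p

/-- `D` is `μ`-complete. -/
def MuComplete {I : Type} (μ : Cardinal) (D : Ultrafilter I) : Prop :=
  ∀ S : Set (Set I), #S < μ → (∀ A ∈ S, A ∈ D) → ⋂₀ S ∈ D

/-- `D` is `(μ,lam)`-regular: there is a family of `lam`-many members of `D`
every intersection of `μ`-many of which is empty. -/
def RegUF {I : Type} (μ lam : Cardinal) (D : Ultrafilter I) : Prop :=
  ∃ (A : Type) (Z : A → Set I), #A = lam ∧ (∀ a, Z a ∈ D) ∧
    ∀ S : Set A, #S = μ → ⋂ a ∈ S, Z a = ∅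

/-- The ordinal space of a cardinal, with the order topology. -/
noncomputable def ordSpace (c : Cardinal) : Type := c.ord.ToType

noncomputable instance (c : Cardinal) : LinearOrder (ordSpace c) :=
  inferInstanceAs (LinearOrder c.ord.ToType)
noncomputable instance (c : Cardinal) : TopologicalSpace (ordSpace c) := Preorder.topology _
instance (c : Cardinal) : OrderTopology (ordSpace c) := ⟨rfl⟩

open Filter Topology in
lemma isDLimit_iff_tendsto {I X : Type} [TopologicalSpace X] (D : Ultrafilter I)
    (x : I → X) (p : X) : IsDLimit D x p ↔ Filter.Tendsto x ↑D (𝓝 p) := by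
  constructor
  · intro h s hs
    obtain ⟨U, hUs, hUo, hpU⟩ := mem_nhds_iff.1 hs
    exact Filter.mem_of_superset (h U hUo hpU) fun i hi => hUs hi
  · intro h U hUo hpU
    exact h (hUo.mem_nhds hpU)

open Topology in
lemma dCompact_pi {I J : Type} (D : Ultrafilter I) (X : J → Type)
    [∀ j, TopologicalSpace (X j)] (h : ∀ j, DCompact D (X j)) :
    DCompact D (∀ j, X j) := by
  intro x
  choose p hp using fun j => h j fun i => x i j
  refine ⟨p, (isDLimit_iff_tendsto D x p).2 ?_⟩
  rw [tendsto_pi_nhds]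
  exact fun j => (isDLimit_iff_tendsto D _ _).1 (hp j)

lemma muComplete_map {μ : Cardinal} {I I' : Type} (D : Ultrafilter I) (f : I → I')
    (h : MuComplete μ D) : MuComplete μ (D.map f) := by
  intro S hS hmem
  have h1 : f ⁻¹' ⋂₀ S = ⋂₀ ((f ⁻¹' ·) '' S) := by
    ext i; simp [Set.mem_sInter]
  have : f ⁻¹' ⋂₀ S ∈ D := by
    rw [h1]
    refine h _ (Cardinal.mk_image_le.trans_lt hS) ?_
    rintro B ⟨A, hA, rfl⟩
    exact Ultrafilter.mem_map.1 (hmem A hA)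
  exact Ultrafilter.mem_map.2 this

theorem stmt11 (μ lam : Cardinal) (hμ : ℵ₀ < μ) (hml : μ ≤ lam)
    (hcpt : ∃ (I : Type) (D : Ultrafilter I), MuComplete μ D ∧ RegUF μ lam D)
    (hsl : lam.IsStrongLimit) (hsing : lam.ord.cof < lam) (hcf : μ ≤ lam.ord.cof)
    (lem1 : ∀ (I Y : Type) (D : Ultrafilter I) (tY : TopologicalSpace Y),
      MuComplete μ D → 2 ^ #I ≤ lam → CptIn μ lam Y → DCompact D Y)
    (lem2 : ∀ (ν : Cardinal) (I Y : Type) (D : Ultrafilter I) (tY : TopologicalSpace Y),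
      RegUF μ ν D → DCompact D Y → CptIn μ ν Y) :
    ∀ (J : Type) (X : J → Type) (tX : ∀ j, TopologicalSpace (X j)),
      (∀ j, CptIn μ lam (X j)) → CptIn μ lam (∀ j, X j) := by
  intro J X tX hX
  -- Step 1: the product is [μ,ν]-compact for every ν < λ.
  have key : ∀ ν : Cardinal, ν < lam → CptIn μ ν (∀ j, X j) := by
    intro ν hν
    obtain ⟨I, D, hDc, A, Z, hAcard, hZD, hZreg⟩ := hcpt
    obtain ⟨A', hA'⟩ : ∃ A' : Set A, #A' = ν :=
      le_mk_iff_exists_set.1 (by rw [hAcard]; exact hν.le)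
    set f : I → Set A' := fun i => {a : A' | i ∈ Z ↑a} with hf
    have hsmall : ∀ i, #(f i) < μ := by
      intro i
      by_contra hge
      push_neg at hge
      have h2 : μ ≤ #(Subtype.val '' f i : Set A) := by
        rw [Cardinal.mk_image_eq Subtype.val_injective]; exact hge
      obtain ⟨S, hSsub, hScard⟩ := Cardinal.le_mk_iff_exists_subset.1 h2
      have hempty := hZreg S hScard
      have hi : i ∈ ⋂ a ∈ S, Z a := by
        refine Set.mem_iInter₂.2 fun a ha => ?_
        obtain ⟨b, hb, rfl⟩ := hSsub ha
        exact hb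
      rw [hempty] at hi
      exact hi
    have hcomp' : MuComplete μ (D.map f) := muComplete_map D f hDc
    have hreg' : RegUF μ ν (D.map f) := by
      refine ⟨A', fun a => {s : Set A' | a ∈ s ∧ #s < μ}, hA', fun a => ?_, fun S hS => ?_⟩
      · rw [Ultrafilter.mem_map]
        exact Filter.mem_of_superset (hZD ↑a) fun i hi => ⟨hi, hsmall i⟩
      · ext s
        simp only [Set.mem_iInter, Set.mem_setOf_eq, Set.mem_empty_iff_false, iff_false]
        intro hall
        have hne : S.Nonempty := by
          rw [← Set.nonempty_coe_sort, ← Cardinal.mk_ne_zero_iff, hS]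
          exact (aleph0_pos.trans hμ).ne'
        obtain ⟨a0, ha0⟩ := hne
        have hsub : S ⊆ s := fun a ha => (hall a ha).1
        have hle : μ ≤ #s := hS ▸ Cardinal.mk_le_mk_of_subset hsub
        exact absurd (hall a0 ha0).2 (not_lt.2 hle)
    have hDcomp : DCompact (D.map f) (∀ j, X j) := by
      refine dCompact_pi _ _ fun j => lem1 (Set A') (X j) (D.map f) (tX j) hcomp' ?_ (hX j)
      calc 2 ^ #(Set A') = 2 ^ (2 ^ ν) := by rw [Cardinal.mk_set, hA']
        _ ≤ lam := (hsl.two_power_lt (hsl.two_power_lt hν)).le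
    exact lem2 ν (Set A') (∀ j, X j) (D.map f) _ hreg' hDcomp
  -- Step 2: assemble the full λ case using the cofinality of λ.
  intro 𝒰 hopen hcard hcover
  rcases Set.eq_empty_or_nonempty 𝒰 with rfl | hne
  · exact ⟨∅, Set.Subset.refl _,
      by rw [Cardinal.mk_emptyCollection]; exact aleph0_pos.trans hμ, hcover⟩
  haveI : Nonempty ↥𝒰 := hne.to_subtype
  obtain ⟨g⟩ : Nonempty (↥𝒰 ↪ lam.ord.ToType) := by
    rw [← Cardinal.le_def, Cardinal.mk_ord_toType]; exact hcard
  set f : lam.ord.ToType → Set (∀ j, X j) := fun i => ↑(Function.invFun g i) with hfdef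
  have hfmem : ∀ i, f i ∈ 𝒰 := fun i => (Function.invFun g i).2
  have hfsurj : ∀ U ∈ 𝒰, ∃ i, f i = U := by
    intro U hU
    obtain ⟨i, hi⟩ := Function.invFun_surjective g.injective ⟨U, hU⟩
    exact ⟨i, congrArg Subtype.val hi⟩
  set V : lam.ord.ToType → Set (∀ j, X j) := fun i => ⋃ i' ∈ Set.Iic i, f i' with hVdef
  have hVopen : ∀ i, IsOpen (V i) := fun i => isOpen_biUnion fun i' _ => hopen _ (hfmem i')
  haveI : IsWellOrder lam.ord.ToType (· < ·) := isWellOrder_lt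
  obtain ⟨S, hSunb, hScard⟩ :=
    Order.exists_cof_eq lam.ord.ToType
  rw [Ordinal.cof_toType] at hScard
  have hC : ⋃₀ (V '' S) = Set.univ := by
    rw [Set.eq_univ_iff_forall]
    intro x
    have hx : x ∈ ⋃₀ 𝒰 := hcover ▸ Set.mem_univ x
    obtain ⟨U, hU, hxU⟩ := hx
    obtain ⟨i0, rfl⟩ := hfsurj U hU
    obtain ⟨i, hiS, hle⟩ := hSunb i0
    exact ⟨V i, ⟨i, hiS, rfl⟩, Set.mem_biUnion hle hxU⟩
  obtain ⟨𝒱', h𝒱'sub, h𝒱'card, h𝒱'cov⟩ := key lam.ord.cof hsing (V '' S)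
    (by rintro _ ⟨i, _, rfl⟩; exact hVopen i)
    (by rw [← hScard]; exact Cardinal.mk_image_le) hC
  have hchoice : ∀ W : ↥𝒱', ∃ i, i ∈ S ∧ V i = ↑W := by
    intro W
    obtain ⟨i, hiS, hiW⟩ := h𝒱'sub W.2
    exact ⟨i, hiS, hiW⟩
  choose idx hidxS hidxV using hchoice
  have hbdd : Set.Bounded (· < ·) (Set.range idx) := by
    refine not_isCofinal_iff.1 fun hc => ?_
    have hcl := Order.cof_le hc
    rw [Ordinal.cof_toType] at hcl
    exact absurd hcl (not_le.2 ((Cardinal.mk_range_le.trans_lt h𝒱'card).trans_le hcf))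
  obtain ⟨b, hb⟩ := hbdd
  set 𝒲 : Set (Set (∀ j, X j)) := f '' Set.Iio b with h𝒲def
  have h𝒲sub : 𝒲 ⊆ 𝒰 := by rintro _ ⟨i, _, rfl⟩; exact hfmem i
  have h𝒲cov : ⋃₀ 𝒲 = Set.univ := by
    rw [Set.eq_univ_iff_forall]
    intro x
    have hx : x ∈ ⋃₀ 𝒱' := h𝒱'cov ▸ Set.mem_univ x
    obtain ⟨W, hW, hxW⟩ := hx
    have hxV : x ∈ V (idx ⟨W, hW⟩) := (hidxV ⟨W, hW⟩).symm ▸ hxW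
    obtain ⟨i', hi', hxi'⟩ := Set.mem_iUnion₂.1 hxV
    exact ⟨f i', ⟨i', lt_of_le_of_lt hi' (hb _ (Set.mem_range_self _)), rfl⟩, hxi'⟩
  have h𝒲card : #𝒲 < lam := by
    exact Cardinal.mk_image_le.trans_lt (Cardinal.mk_Iio_ord_toType b)
  obtain ⟨𝒱, h1, h2, h3⟩ := key #𝒲 h𝒲card 𝒲
    (fun U hU => hopen U (h𝒲sub hU)) le_rfl h𝒲cov
  exact ⟨𝒱, h1.trans h𝒲sub, h2, h3⟩
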